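/- Let α, β ≥ -1/2 and γ₁, γ₂, κ, κ₁, κ₂ ≥ 0. There exists a constant C depending only on these parameters such that for all θ, φ ∈ (0,π) with θ ≠ φ one has (sin(θ/2)+sin(φ/2))^{2γ₁} (cos(θ/2)+cos(φ/2))^{2γ₂} ∬_{[-1,1]²} dΠ_{α+γ₁+κ+κ₁}(u) dΠ_{β+γ₂+κ+κ₂}(v) / q(θ,φ,u,v)^{α+β+3/2+γ₁+γ₂+κ} ≤ C / μ_{α,β}^+(B(θ, |θ-φ|)). -/

import Mathlib

open MeasureTheory Real Set

noncomputable section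

/-- The Jacobi measure `μ_{α,β}^+` on `(0,π)`: density
`(sin(θ/2))^(2α+1) (cos(θ/2))^(2β+1)` w.r.t. Lebesgue measure on `(0,π)`. -/
def jacobiMeasure (α β : ℝ) : Measure ℝ :=
  (volume.restrict (Ioo 0 π)).withDensity
    (fun θ => ENNReal.ofReal (Real.sin (θ / 2) ^ (2 * α + 1) * Real.cos (θ / 2) ^ (2 * β + 1)))

/-- The ball `B(θ,r) = (θ-r, θ+r) ∩ (0,π)`. -/
def jacobiBall (θ r : ℝ) : Set ℝ := Ioo (θ - r) (θ + r) ∩ Ioo 0 π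

/-- The measure `Π_α` on `[-1,1]`. -/
def PiMeasure (α : ℝ) : Measure ℝ :=
  if α = -(1 / 2) then (2 : ENNReal)⁻¹ • (Measure.dirac (-1) + Measure.dirac 1)
  else
    (volume.restrict (Icc (-1) 1)).withDensity
      (fun u => ENNReal.ofReal
        (Real.Gamma (α + 1) / (Real.sqrt π * Real.Gamma (α + 1 / 2)) * (1 - u ^ 2) ^ (α - 1 / 2)))

/-- `q(θ,φ,u,v) = 1 - u sin(θ/2) sin(φ/2) - v cos(θ/2) cos(φ/2)`. -/
def qfun (θ φ u v : ℝ) : ℝ :=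
  1 - u * Real.sin (θ / 2) * Real.sin (φ / 2) - v * Real.cos (θ / 2) * Real.cos (φ / 2)

/-- `Ψ^{α,β}(t,s) = sinh(t/2) / (cosh(t/2) - 1 + s)^(α+β+2)`. -/
def Psi (α β t s : ℝ) : ℝ :=
  Real.sinh (t / 2) / (Real.cosh (t / 2) - 1 + s) ^ (α + β + 2)

/-- The Jacobi-Poisson kernel `H_t^{α,β}(θ,φ)`. -/
def Hker (α β t θ φ : ℝ) : ℝ :=
  ((2 : ℝ) ^ (-(α + β + 2)) / (jacobiMeasure α β (Ioo 0 π)).toReal) * Real.sinh (t / 2) *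
    ∫ u, ∫ v, 1 / (Real.cosh (t / 2) - 1 + qfun θ φ u v) ^ (α + β + 2)
      ∂(PiMeasure β) ∂(PiMeasure α)

/-- The symmetrized kernel `H̃_t^{α,β}(θ,φ) = (1/4) sin θ sin φ H_t^{α+1,β+1}(θ,φ)`. -/
def Htilde (α β t θ φ : ℝ) : ℝ :=
  (1 / 4) * Real.sin θ * Real.sin φ * Hker (α + 1) (β + 1) t θ φ

end

section Aux

lemma abs_sin_sub_sin_le (x y : ℝ) : |Real.sin x - Real.sin y| ≤ |x - y| := by
  rw [Real.sin_sub_sin, abs_mul, abs_mul]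
  have h1 : |Real.sin ((x - y) / 2)| ≤ |(x - y) / 2| := Real.abs_sin_le_abs
  have h2 : |Real.cos ((x + y) / 2)| ≤ 1 := Real.abs_cos_le_one _
  have h3 : |(x - y) / 2| = |x - y| / 2 := by rw [abs_div]; norm_num
  calc |(2:ℝ)| * |Real.sin ((x - y) / 2)| * |Real.cos ((x + y) / 2)|
      ≤ |(2:ℝ)| * (|x - y| / 2) * 1 := by
        apply mul_le_mul (mul_le_mul le_rfl (h3 ▸ h1) (abs_nonneg _) (abs_nonneg _)) h2
          (abs_nonneg _) (by positivity)
    _ = |x - y| := by rw [abs_two]; ring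

lemma abs_cos_sub_cos_le (x y : ℝ) : |Real.cos x - Real.cos y| ≤ |x - y| := by
  rw [Real.cos_sub_cos]
  have h1 : |Real.sin ((x - y) / 2)| ≤ |(x - y) / 2| := Real.abs_sin_le_abs
  have h2 : |Real.sin ((x + y) / 2)| ≤ 1 := Real.abs_sin_le_one _
  have h3 : |(x - y) / 2| = |x - y| / 2 := by rw [abs_div]; norm_num
  calc |(-2:ℝ) * Real.sin ((x + y) / 2) * Real.sin ((x - y) / 2)|
      = |(-2:ℝ)| * |Real.sin ((x + y) / 2)| * |Real.sin ((x - y) / 2)| := by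
        rw [abs_mul, abs_mul]
    _ ≤ |(-2:ℝ)| * 1 * (|x - y| / 2) := by
        apply mul_le_mul (mul_le_mul le_rfl h2 (abs_nonneg _) (abs_nonneg _)) (h3 ▸ h1)
          (abs_nonneg _) (by positivity)
    _ = |x - y| := by rw [abs_neg, abs_two]; ring

lemma piMeasure_ae_Icc {a : ℝ} : ∀ᵐ u ∂(PiMeasure a), u ∈ Icc (-1:ℝ) 1 := by
  unfold PiMeasure
  split_ifs with h
  · rw [ae_iff]
    have h1 : Measure.dirac (-1:ℝ) {u : ℝ | ¬u ∈ Icc (-1:ℝ) 1} = 0 := by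
      rw [Measure.dirac_apply, Set.indicator_of_notMem]
      simp only [mem_setOf_eq, not_not, mem_Icc]
      constructor <;> norm_num
    have h2 : Measure.dirac (1:ℝ) {u : ℝ | ¬u ∈ Icc (-1:ℝ) 1} = 0 := by
      rw [Measure.dirac_apply, Set.indicator_of_notMem]
      simp only [mem_setOf_eq, not_not, mem_Icc]
      constructor <;> norm_num
    simp [Measure.add_apply, h1, h2]
  · exact Filter.Eventually.filter_mono
      ((withDensity_absolutelyContinuous _ _).ae_le)
      (ae_restrict_mem measurableSet_Icc)

end Aux

section IntHelpers
open MeasureTheory Real Set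

lemma lint_head {c : ℝ} (hc : -1 < c) {t : ℝ} (ht : 0 ≤ t) :
    ∫⁻ u in Ioc (1 - t) 1, ENNReal.ofReal ((1 - u) ^ c) ≤
      ENNReal.ofReal (t ^ (c + 1) / (c + 1)) := by
  have hII : IntervalIntegrable (fun u : ℝ => (1 - u) ^ c) volume (1 - t) 1 := by
    have h := (intervalIntegral.intervalIntegrable_rpow' (a := t) (b := 0) hc).comp_sub_left 1
    simpa using h
  have hInt : IntegrableOn (fun u : ℝ => (1 - u) ^ c) (Ioc (1 - t) 1) volume :=
    (intervalIntegrable_iff_integrableOn_Ioc_of_le (by linarith)).1 hII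
  have hnn : 0 ≤ᶠ[ae (volume.restrict (Ioc (1 - t) 1))] fun u : ℝ => (1 - u) ^ c := by
    filter_upwards [ae_restrict_mem measurableSet_Ioc] with u hu
    exact Real.rpow_nonneg (by linarith [hu.2]) _
  rw [← ofReal_integral_eq_lintegral_ofReal hInt hnn]
  apply ENNReal.ofReal_le_ofReal
  have h1 : ∫ u in Ioc (1 - t) 1, (1 - u) ^ c = ∫ u in (1 - t)..1, (1 - u) ^ c :=
    (intervalIntegral.integral_of_le (by linarith)).symm
  have h2 : ∫ u in (1 - t)..1, (1 - u) ^ c = ∫ x in (0:ℝ)..t, x ^ c := by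
    have h := intervalIntegral.integral_comp_sub_left (a := 1 - t) (b := 1)
      (fun x : ℝ => x ^ c) 1
    simpa using h
  rw [h1, h2, integral_rpow (Or.inl hc), Real.zero_rpow (by linarith), sub_zero]

lemma lint_tail {e : ℝ} (he : e < -1) {t : ℝ} (h0 : 0 < t) (h1 : t ≤ 1) :
    ∫⁻ u in Ioc 0 (1 - t), ENNReal.ofReal ((1 - u) ^ e) ≤
      ENNReal.ofReal (t ^ (e + 1) / (-(e + 1))) := by
  have hbase : IntervalIntegrable (fun x : ℝ => x ^ e) volume t 1 := by
    apply ContinuousOn.intervalIntegrable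
    apply ContinuousOn.rpow_const continuousOn_id
    intro x hx
    rw [Set.uIcc_of_le h1] at hx
    exact Or.inl (ne_of_gt (lt_of_lt_of_le h0 hx.1))
  have hII : IntervalIntegrable (fun u : ℝ => (1 - u) ^ e) volume 0 (1 - t) := by
    have h := hbase.comp_sub_left 1
    -- h : IntervalIntegrable (fun x => (1 - x) ^ e) volume (1 - t) (1 - 1)
    have h' := h.symm
    simpa using h'
  have hInt : IntegrableOn (fun u : ℝ => (1 - u) ^ e) (Ioc 0 (1 - t)) volume :=
    (intervalIntegrable_iff_integrableOn_Ioc_of_le (by linarith)).1 hII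
  have hnn : 0 ≤ᶠ[ae (volume.restrict (Ioc 0 (1 - t)))] fun u : ℝ => (1 - u) ^ e := by
    filter_upwards [ae_restrict_mem measurableSet_Ioc] with u hu
    exact Real.rpow_nonneg (by linarith [hu.2]) _
  rw [← ofReal_integral_eq_lintegral_ofReal hInt hnn]
  apply ENNReal.ofReal_le_ofReal
  have h1' : ∫ u in Ioc 0 (1 - t), (1 - u) ^ e = ∫ u in (0:ℝ)..(1 - t), (1 - u) ^ e :=
    (intervalIntegral.integral_of_le (by linarith)).symm
  have h2 : ∫ u in (0:ℝ)..(1 - t), (1 - u) ^ e = ∫ x in t..(1:ℝ), x ^ e := by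
    have h := intervalIntegral.integral_comp_sub_left (a := (0:ℝ)) (b := 1 - t)
      (fun x : ℝ => x ^ e) 1
    simpa using h
  have h3 : ∫ x in t..(1:ℝ), x ^ e = (1 - t ^ (e + 1)) / (e + 1) := by
    have hmem : (0:ℝ) ∉ Set.uIcc t 1 := by
      rw [Set.uIcc_of_le h1]
      intro hm
      exact absurd hm.1 (by linarith)
    rw [integral_rpow (Or.inr ⟨by linarith, hmem⟩), Real.one_rpow]
  rw [h1', h2, h3]
  have hd : 0 < -(e + 1) := by linarith
  have hne : e + 1 ≠ 0 := by linarith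
  have htp : 0 ≤ t ^ (e + 1) := Real.rpow_nonneg h0.le _
  have h4 : (1 - t ^ (e + 1)) / (e + 1) = (t ^ (e + 1) - 1) / (-(e + 1)) := by
    rw [show t ^ (e + 1) - 1 = -(1 - t ^ (e + 1)) by ring, neg_div_neg_eq]
  rw [h4]
  exact div_le_div_of_nonneg_right (by linarith) hd.le

lemma lint_left {c : ℝ} (hc : -1 < c) :
    ∫⁻ u in Icc (-1:ℝ) 0, ENNReal.ofReal ((1 + u) ^ c) ≤ ENNReal.ofReal (1 / (c + 1)) := by
  have hres : volume.restrict (Icc (-1:ℝ) 0) = volume.restrict (Ioc (-1:ℝ) 0) :=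
    (Measure.restrict_congr_set Ioc_ae_eq_Icc).symm
  rw [hres]
  have hII : IntervalIntegrable (fun u : ℝ => (1 + u) ^ c) volume (-1) 0 := by
    have h := (intervalIntegral.intervalIntegrable_rpow' (a := (0:ℝ)) (b := 1) hc).comp_add_right 1
    -- h : IntervalIntegrable (fun x => (x + 1) ^ c) volume (0 - 1) (1 - 1)
    have h2 : IntervalIntegrable (fun x : ℝ => (x + 1) ^ c) volume (-1) 0 := by simpa using h
    simpa [add_comm] using h2
  have hInt : IntegrableOn (fun u : ℝ => (1 + u) ^ c) (Ioc (-1:ℝ) 0) volume :=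
    (intervalIntegrable_iff_integrableOn_Ioc_of_le (by linarith)).1 hII
  have hnn : 0 ≤ᶠ[ae (volume.restrict (Ioc (-1:ℝ) 0))] fun u : ℝ => (1 + u) ^ c := by
    filter_upwards [ae_restrict_mem measurableSet_Ioc] with u hu
    exact Real.rpow_nonneg (by linarith [hu.1]) _
  rw [← ofReal_integral_eq_lintegral_ofReal hInt hnn]
  apply ENNReal.ofReal_le_ofReal
  have h1 : ∫ u in Ioc (-1:ℝ) 0, (1 + u) ^ c = ∫ u in (-1:ℝ)..0, (1 + u) ^ c :=
    (intervalIntegral.integral_of_le (by linarith)).symm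
  have h2 : ∫ u in (-1:ℝ)..0, (1 + u) ^ c = ∫ x in (0:ℝ)..1, x ^ c := by
    have h := intervalIntegral.integral_comp_add_right (a := (-1:ℝ)) (b := 0)
      (fun x : ℝ => x ^ c) 1
    have h' : ∫ u in (-1:ℝ)..0, (u + 1) ^ c = ∫ x in (0:ℝ)..1, x ^ c := by simpa using h
    simpa [add_comm] using h'
  rw [h1, h2, integral_rpow (Or.inl hc), Real.one_rpow, Real.zero_rpow (by linarith), sub_zero]

lemma piece_bound {s : Set ℝ} (hs : MeasurableSet s) (d g h : ℝ → ℝ) (K B : ℝ)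
    (hK : 0 ≤ K) (hB : 0 ≤ B)
    (hd : ∀ u ∈ s, 0 ≤ d u)
    (hpt : ∀ u ∈ s, d u * g u ≤ K * h u)
    (hint : ∫⁻ u in s, ENNReal.ofReal (h u) ≤ ENNReal.ofReal B) :
    ∫⁻ u in s, ENNReal.ofReal (d u) * ENNReal.ofReal (g u) ≤ ENNReal.ofReal (K * B) := by
  have h1 : ∫⁻ u in s, ENNReal.ofReal (d u) * ENNReal.ofReal (g u) ≤
      ∫⁻ u in s, ENNReal.ofReal K * ENNReal.ofReal (h u) := by
    refine lintegral_mono_ae ?_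
    filter_upwards [ae_restrict_mem hs] with u hu
    rw [← ENNReal.ofReal_mul (hd u hu), ← ENNReal.ofReal_mul hK]
    exact ENNReal.ofReal_le_ofReal (hpt u hu)
  refine h1.trans ?_
  rw [lintegral_const_mul' _ _ ENNReal.ofReal_ne_top, ENNReal.ofReal_mul hK]
  exact mul_le_mul_right hint _

end IntHelpers

section OneDim
open MeasureTheory Real Set

set_option maxHeartbeats 1000000 in
lemma one_dim (a p m : ℝ) (ha : -(1/2) ≤ a) (hm0 : 0 ≤ m) (hma : m ≤ a + 1/2)
    (hmp : m < p) :
    ∃ C : ℝ, 0 < C ∧ ∀ A b : ℝ, 0 < A → 0 ≤ b →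
      ∫⁻ u, ENNReal.ofReal (1 / (A + b * (1 - u)) ^ p) ∂(PiMeasure a)
        ≤ ENNReal.ofReal (C * (A ^ (m - p) * (A + b) ^ (-m))) := by
  have hp0 : 0 ≤ p := le_trans hm0 hmp.le
  rcases eq_or_lt_of_le ha with heq | hlt
  · -- Dirac case : a = -1/2, m = 0
    have hm : m = 0 := le_antisymm (by linarith) hm0
    refine ⟨1, one_pos, fun A b hA hb => ?_⟩
    have hpm : PiMeasure a = (2 : ENNReal)⁻¹ • (Measure.dirac (-1) + Measure.dirac 1) := by
      unfold PiMeasure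
      rw [if_pos heq.symm]
    rw [hpm, lintegral_smul_measure, lintegral_add_measure, lintegral_dirac, lintegral_dirac]
    have hAp : (0:ℝ) < A ^ p := Real.rpow_pos_of_pos hA p
    have h2 : (1:ℝ) / (A + b * (1 - (-1))) ^ p ≤ 1 / A ^ p := by
      apply one_div_le_one_div_of_le hAp
      apply Real.rpow_le_rpow hA.le (by linarith) hp0
    have h1 : (1:ℝ) / (A + b * (1 - 1)) ^ p = 1 / A ^ p := by norm_num
    have hgoal : ENNReal.ofReal (1 / A ^ p) =
        ENNReal.ofReal (1 * (A ^ (m - p) * (A + b) ^ (-m))) := by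
      rw [hm]
      rw [neg_zero, Real.rpow_zero, zero_sub, Real.rpow_neg hA.le, mul_one, one_mul, one_div]
    calc (2:ENNReal)⁻¹ * (ENNReal.ofReal (1 / (A + b * (1 - (-1))) ^ p)
          + ENNReal.ofReal (1 / (A + b * (1 - 1)) ^ p))
        ≤ (2:ENNReal)⁻¹ * (ENNReal.ofReal (1 / A ^ p) + ENNReal.ofReal (1 / A ^ p)) := by
          exact mul_le_mul_right (add_le_add (ENNReal.ofReal_le_ofReal h2)
            (ENNReal.ofReal_le_ofReal h1.le)) _
      _ = ENNReal.ofReal (1 / A ^ p) := by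
          rw [← two_mul, ← mul_assoc,
            ENNReal.inv_mul_cancel two_ne_zero ENNReal.ofNat_ne_top, one_mul]
      _ = _ := hgoal
  · -- density case
    have hne : ¬ a = -(1/2) := by
      intro h
      rw [h] at hlt
      exact lt_irrefl _ hlt
    set ca := Real.Gamma (a + 1) / (Real.sqrt π * Real.Gamma (a + 1/2)) with hca
    have hca_pos : 0 < ca := by
      apply div_pos (Real.Gamma_pos_of_pos (by linarith))
      exact mul_pos (Real.sqrt_pos.2 Real.pi_pos) (Real.Gamma_pos_of_pos (by linarith))
    set M := max (1:ℝ) ((2:ℝ) ^ (a - 1/2)) with hM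
    have hM1 : (1:ℝ) ≤ M := le_max_left _ _
    have hMpos : (0:ℝ) < M := lt_of_lt_of_le one_pos hM1
    have ha12 : 0 < a + 1/2 := by linarith
    have hpm' : 0 < p - m := by linarith
    have h2pow : (0:ℝ) < 2 ^ (a + 1/2) := Real.rpow_pos_of_pos two_pos _
    have h2powp : (0:ℝ) < 2 ^ p := Real.rpow_pos_of_pos two_pos _
    refine ⟨ca * M * (1/(a+1/2)) + (ca * M * (2 ^ p / (p - m)) + ca * M * (2 ^ (a+1/2) / (a+1/2))),
      by positivity, fun A b hA hb => ?_⟩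
    have hAb : (0:ℝ) < A + b := by linarith
    have hpm_meas : PiMeasure a = (volume.restrict (Icc (-1) 1)).withDensity
        (fun u => ENNReal.ofReal (ca * (1 - u ^ 2) ^ (a - 1/2))) := by
      unfold PiMeasure
      rw [if_neg hne]
    have hdens_meas : Measurable (fun u : ℝ => ENNReal.ofReal (ca * (1 - u ^ 2) ^ (a - 1/2))) := by
      fun_prop
    rw [hpm_meas, lintegral_withDensity_eq_lintegral_mul_non_measurable _ hdens_meas
      (Filter.Eventually.of_forall fun x => ENNReal.ofReal_lt_top) _]
    simp only [Pi.mul_apply]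
    -- notation for the split
    set σ := A / (A + b) with hσ
    have hσ0 : 0 < σ := div_pos hA hAb
    have hσ1 : σ ≤ 1 := by
      rw [div_le_one hAb]
      linarith
    set τ := min (2*σ) 1 with hτ
    have hτ0 : 0 < τ := lt_min (by linarith) one_pos
    have hτ1 : τ ≤ 1 := min_le_right _ _
    have hτσ : τ ≤ 2*σ := min_le_left _ _
    have hστ : σ ≤ τ := le_min (by linarith) hσ1
    set X := A ^ (m-p) * (A+b) ^ (-m) with hX
    have hXpos : 0 < X := mul_pos (Real.rpow_pos_of_pos hA _) (Real.rpow_pos_of_pos hAb _)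
    have hApow : (0:ℝ) < A ^ p := Real.rpow_pos_of_pos hA p
    have hAbpow : (0:ℝ) < (A+b) ^ p := Real.rpow_pos_of_pos hAb p
    -- subset splitting
    have hsubset : Icc (-1:ℝ) 1 ⊆ Icc (-1:ℝ) 0 ∪ (Ioc 0 (1-τ) ∪ Ioc (1-τ) 1) := by
      intro u hu
      rcases le_or_gt u 0 with h | h
      · exact Or.inl ⟨hu.1, h⟩
      · rcases le_or_gt u (1-τ) with h2 | h2
        · exact Or.inr (Or.inl ⟨h, h2⟩)
        · exact Or.inr (Or.inr ⟨h2, hu.2⟩)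
    refine le_trans (lintegral_mono_set hsubset) ?_
    refine le_trans (lintegral_union_le _ _ _) ?_
    refine le_trans (add_le_add_right (lintegral_union_le _ _ _) _) ?_
    -- bound on (1+u)^(a-1/2) for u ∈ [0,1] and (1-u)^(a-1/2) for u ∈ [-1,0]
    have hfac : ∀ w : ℝ, 1 ≤ w → w ≤ 2 → w ^ (a - 1/2) ≤ M := by
      intro w h1w h2w
      rcases le_or_gt 0 (a - 1/2) with hc | hc
      · exact le_trans (Real.rpow_le_rpow (by linarith) h2w hc) (le_max_right _ _)
      · refine le_trans ?_ hM1
        calc w ^ (a - 1/2) ≤ 1 ^ (a - 1/2) :=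
              Real.rpow_le_rpow_of_nonpos one_pos h1w hc.le
          _ = 1 := Real.one_rpow _
    -- Piece 1 : u ∈ [-1, 0]
    have hP1 : ∫⁻ u in Icc (-1:ℝ) 0,
        ENNReal.ofReal (ca * (1 - u ^ 2) ^ (a - 1/2)) *
          ENNReal.ofReal (1 / (A + b * (1 - u)) ^ p)
        ≤ ENNReal.ofReal ((ca * M * ((A+b) ^ (-p))) * (1/(a+1/2))) := by
      apply piece_bound measurableSet_Icc (fun u => ca * (1 - u ^ 2) ^ (a - 1/2))
        (fun u => 1 / (A + b * (1 - u)) ^ p) (fun u => (1+u) ^ (a - 1/2))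
        (ca * M * ((A+b) ^ (-p))) (1/(a+1/2))
      · positivity
      · positivity
      · intro u hu
        have h1 : (0:ℝ) ≤ 1 - u^2 := by nlinarith [hu.1, hu.2]
        positivity
      · intro u hu
        obtain ⟨hu1, hu2⟩ := hu
        have h1u : (0:ℝ) ≤ 1 - u := by linarith
        have h1u' : (0:ℝ) ≤ 1 + u := by linarith
        have hsplit : (1 - u^2 : ℝ) ^ (a - 1/2) = (1-u) ^ (a-1/2) * (1+u) ^ (a-1/2) := by
          rw [show (1 - u^2 : ℝ) = (1-u) * (1+u) by ring, Real.mul_rpow h1u h1u']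
        have hb1 : (1-u) ^ (a-1/2) ≤ M := hfac _ (by linarith) (by linarith)
        have hb2 : (1:ℝ) / (A + b * (1 - u)) ^ p ≤ (A+b) ^ (-p) := by
          rw [Real.rpow_neg hAb.le, ← one_div]
          apply one_div_le_one_div_of_le hAbpow
          apply Real.rpow_le_rpow hAb.le (by nlinarith) hp0
        have hg0 : (0:ℝ) ≤ 1 / (A + b * (1 - u)) ^ p := by
          apply div_nonneg zero_le_one
          exact Real.rpow_nonneg (by nlinarith) _
        calc ca * (1 - u^2) ^ (a - 1/2) * (1 / (A + b * (1 - u)) ^ p)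
            = (ca * ((1-u) ^ (a-1/2) * (1 / (A + b * (1 - u)) ^ p))) * (1+u) ^ (a-1/2) := by
              rw [hsplit]; ring
          _ ≤ (ca * (M * ((A+b) ^ (-p)))) * (1+u) ^ (a-1/2) := by
              apply mul_le_mul_of_nonneg_right _ (Real.rpow_nonneg h1u' _)
              apply mul_le_mul_of_nonneg_left _ hca_pos.le
              exact mul_le_mul hb1 hb2 hg0 hMpos.le
          _ = (ca * M * ((A+b) ^ (-p))) * (1+u) ^ (a-1/2) := by ring
      · have h := lint_left (c := a - 1/2) (by linarith)
        rw [show a - 1/2 + 1 = a + 1/2 by ring] at h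
        exact h
    -- Piece 2 : u ∈ (0, 1-τ]
    have hP2 : ∫⁻ u in Ioc (0:ℝ) (1-τ),
        ENNReal.ofReal (ca * (1 - u ^ 2) ^ (a - 1/2)) *
          ENNReal.ofReal (1 / (A + b * (1 - u)) ^ p)
        ≤ ENNReal.ofReal ((ca * M * (2 ^ p * (A+b) ^ (-p))) * (τ ^ (m-p) / (p-m))) := by
      apply piece_bound measurableSet_Ioc (fun u => ca * (1 - u ^ 2) ^ (a - 1/2))
        (fun u => 1 / (A + b * (1 - u)) ^ p) (fun u => (1-u) ^ (m-p-1))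
        (ca * M * (2 ^ p * (A+b) ^ (-p))) (τ ^ (m-p) / (p-m))
      · positivity
      · positivity
      · intro u hu
        have h1 : (0:ℝ) ≤ 1 - u^2 := by nlinarith [hu.1, hu.2, hτ0, hτ1]
        positivity
      · intro u hu
        obtain ⟨hu1, hu2⟩ := hu
        have h1u : (0:ℝ) < 1 - u := by nlinarith [hτ0]
        have h1u' : (0:ℝ) ≤ 1 + u := by linarith
        have hsplit : (1 - u^2 : ℝ) ^ (a - 1/2) = (1-u) ^ (a-1/2) * (1+u) ^ (a-1/2) := by
          rw [show (1 - u^2 : ℝ) = (1-u) * (1+u) by ring, Real.mul_rpow h1u.le h1u']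
        have hb1 : (1+u) ^ (a-1/2) ≤ M := hfac _ (by linarith) (by linarith)
        -- 1/(A+b(1-u))^p ≤ 2^p (1-u)^(-p) (A+b)^(-p)
        have hden : ((1-u)/2) * (A+b) ≤ A + b * (1 - u) := by nlinarith
        have hdenpos : (0:ℝ) < ((1-u)/2) * (A+b) := by positivity
        have hb2 : (1:ℝ) / (A + b * (1 - u)) ^ p ≤ 2 ^ p * ((1-u) ^ (-p) * (A+b) ^ (-p)) := by
          have h1 : (1:ℝ) / (A + b * (1 - u)) ^ p ≤ 1 / (((1-u)/2) * (A+b)) ^ p := by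
            apply one_div_le_one_div_of_le (Real.rpow_pos_of_pos hdenpos p)
            exact Real.rpow_le_rpow hdenpos.le hden hp0
          refine h1.trans_eq ?_
          rw [Real.mul_rpow (by positivity) hAb.le, Real.div_rpow h1u.le (by norm_num)]
          rw [Real.rpow_neg h1u.le, Real.rpow_neg hAb.le]
          field_simp
        have hsum : (1-u) ^ (a-1/2) * (1-u) ^ (-p) ≤ (1-u) ^ (m-p-1) := by
          rw [← Real.rpow_add h1u]
          have : (1-u) ^ (a - 1/2 + -p) = (1-u) ^ (a + 1/2 - m) * (1-u) ^ (m-p-1) := by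
            rw [← Real.rpow_add h1u]
            congr 1
            ring
          rw [this]
          have hle1 : (1-u) ^ (a + 1/2 - m) ≤ 1 :=
            Real.rpow_le_one h1u.le (by linarith) (by linarith)
          nlinarith [Real.rpow_nonneg h1u.le (m-p-1), Real.rpow_nonneg h1u.le (a+1/2-m)]
        have hg0 : (0:ℝ) ≤ 1 / (A + b * (1 - u)) ^ p := by
          apply div_nonneg zero_le_one
          exact Real.rpow_nonneg (by nlinarith) _
        calc ca * (1 - u^2) ^ (a - 1/2) * (1 / (A + b * (1 - u)) ^ p)
            = ca * ((1+u) ^ (a-1/2) * ((1-u) ^ (a-1/2) * (1 / (A + b * (1 - u)) ^ p))) := by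
              rw [hsplit]; ring
          _ ≤ ca * (M * ((1-u) ^ (a-1/2) * (2 ^ p * ((1-u) ^ (-p) * (A+b) ^ (-p))))) := by
              apply mul_le_mul_of_nonneg_left _ hca_pos.le
              apply mul_le_mul hb1 _ (by positivity) hMpos.le
              exact mul_le_mul_of_nonneg_left hb2 (Real.rpow_nonneg h1u.le _)
          _ = ca * M * (2 ^ p * (A+b) ^ (-p)) * ((1-u) ^ (a-1/2) * (1-u) ^ (-p)) := by ring
          _ ≤ ca * M * (2 ^ p * (A+b) ^ (-p)) * (1-u) ^ (m-p-1) := by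
              apply mul_le_mul_of_nonneg_left hsum
              positivity
      · calc ∫⁻ u in Ioc (0:ℝ) (1-τ), ENNReal.ofReal ((1-u) ^ (m-p-1))
            ≤ ENNReal.ofReal (τ ^ (m-p-1+1) / (-(m-p-1+1))) := lint_tail (by linarith) hτ0 hτ1
          _ = ENNReal.ofReal (τ ^ (m-p) / (p-m)) := by
              rw [show m-p-1+1 = m-p by ring, show -(m-p) = p - m by ring]
    -- Piece 3 : u ∈ (1-τ, 1]
    have hP3 : ∫⁻ u in Ioc (1-τ) (1:ℝ),
        ENNReal.ofReal (ca * (1 - u ^ 2) ^ (a - 1/2)) *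
          ENNReal.ofReal (1 / (A + b * (1 - u)) ^ p)
        ≤ ENNReal.ofReal ((ca * M * (1 / A ^ p)) * (τ ^ (a+1/2) / (a+1/2))) := by
      apply piece_bound measurableSet_Ioc (fun u => ca * (1 - u ^ 2) ^ (a - 1/2))
        (fun u => 1 / (A + b * (1 - u)) ^ p) (fun u => (1-u) ^ (a-1/2))
        (ca * M * (1 / A ^ p)) (τ ^ (a+1/2) / (a+1/2))
      · positivity
      · positivity
      · intro u hu
        have h1 : (0:ℝ) ≤ 1 - u^2 := by nlinarith [hu.1, hu.2, hτ0, hτ1]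
        positivity
      · intro u hu
        obtain ⟨hu1, hu2⟩ := hu
        have h1u : (0:ℝ) ≤ 1 - u := by linarith
        have h1u' : (0:ℝ) ≤ 1 + u := by nlinarith [hτ1]
        have hsplit : (1 - u^2 : ℝ) ^ (a - 1/2) = (1-u) ^ (a-1/2) * (1+u) ^ (a-1/2) := by
          rw [show (1 - u^2 : ℝ) = (1-u) * (1+u) by ring, Real.mul_rpow h1u h1u']
        have hb1 : (1+u) ^ (a-1/2) ≤ M := hfac _ (by nlinarith [hτ1]) (by linarith)
        have hb2 : (1:ℝ) / (A + b * (1 - u)) ^ p ≤ 1 / A ^ p := by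
          apply one_div_le_one_div_of_le hApow
          apply Real.rpow_le_rpow hA.le (by nlinarith) hp0
        have hg0 : (0:ℝ) ≤ 1 / (A + b * (1 - u)) ^ p := by
          apply div_nonneg zero_le_one
          exact Real.rpow_nonneg (by nlinarith) _
        calc ca * (1 - u^2) ^ (a - 1/2) * (1 / (A + b * (1 - u)) ^ p)
            = ca * ((1+u) ^ (a-1/2) * (1 / (A + b * (1 - u)) ^ p)) * (1-u) ^ (a-1/2) := by
              rw [hsplit]; ring
          _ ≤ ca * (M * (1 / A ^ p)) * (1-u) ^ (a-1/2) := by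
              apply mul_le_mul_of_nonneg_right _ (Real.rpow_nonneg h1u _)
              apply mul_le_mul_of_nonneg_left _ hca_pos.le
              exact mul_le_mul hb1 hb2 hg0 hMpos.le
          _ = (ca * M * (1 / A ^ p)) * (1-u) ^ (a-1/2) := by ring
      · calc ∫⁻ u in Ioc (1-τ) (1:ℝ), ENNReal.ofReal ((1-u) ^ (a-1/2))
            ≤ ENNReal.ofReal (τ ^ (a-1/2+1) / (a-1/2+1)) := lint_head (by linarith) hτ0.le
          _ = ENNReal.ofReal (τ ^ (a+1/2) / (a+1/2)) := by
              rw [show a-1/2+1 = a+1/2 by ring]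
    -- convert the three constants
    have hσm : (1/A^p) * σ ^ m = X := by
      rw [hX, hσ, Real.div_rpow hA.le hAb.le, Real.rpow_sub hA, Real.rpow_neg hAb.le]
      ring
    have hc1 : (ca * M * ((A+b) ^ (-p))) * (1/(a+1/2)) ≤ ca * M * (1/(a+1/2)) * X := by
      have h1 : (A+b) ^ (-p) ≤ X := by
        rw [hX]
        have e1 : (A+b 
) ^ (-p) = (A+b) ^ (m-p) * (A+b) ^ (-m) := by
          rw [← Real.rpow_add hAb]
          congr 1
          ring
        rw [e1]
        apply mul_le_mul_of_nonneg_right _ (Real.rpow_nonneg hAb.le _)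
        exact Real.rpow_le_rpow_of_nonpos hA (by linarith) (by linarith)
      calc (ca * M * ((A+b) ^ (-p))) * (1/(a+1/2)) = (ca * M * (1/(a+1/2))) * ((A+b) ^ (-p)) := by
            ring
        _ ≤ (ca * M * (1/(a+1/2))) * X := by
            apply mul_le_mul_of_nonneg_left h1
            positivity
    have hc2 : (ca * M * (2 ^ p * (A+b) ^ (-p))) * (τ ^ (m-p) / (p-m)) ≤
        ca * M * (2 ^ p / (p-m)) * X := by
      have ht1 : τ ^ (m-p) ≤ σ ^ (m-p) := Real.rpow_le_rpow_of_nonpos hσ0 hστ (by linarith)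
      have ht2 : (A+b) ^ (-p) * σ ^ (m-p) = X := by
        rw [hX, hσ, Real.div_rpow hA.le hAb.le]
        rw [show -p = (m-p) + (-m) by ring, Real.rpow_add hAb, Real.rpow_neg hAb.le]
        have hne2 : ((A+b) ^ (m-p) : ℝ) ≠ 0 := (Real.rpow_pos_of_pos hAb _).ne'
        field_simp
      calc (ca * M * (2 ^ p * (A+b) ^ (-p))) * (τ ^ (m-p) / (p-m))
          = (ca * M * (2 ^ p / (p-m))) * ((A+b) ^ (-p) * τ ^ (m-p)) := by ring
        _ ≤ (ca * M * (2 ^ p / (p-m))) * ((A+b) ^ (-p) * σ ^ (m-p)) := by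
            apply mul_le_mul_of_nonneg_left _ (by positivity)
            exact mul_le_mul_of_nonneg_left ht1 (Real.rpow_nonneg hAb.le _)
        _ = (ca * M * (2 ^ p / (p-m))) * X := by rw [ht2]
    have hc3 : (ca * M * (1 / A ^ p)) * (τ ^ (a+1/2) / (a+1/2)) ≤
        ca * M * (2 ^ (a+1/2) / (a+1/2)) * X := by
      have ht1 : τ ^ (a+1/2) ≤ 2 ^ (a+1/2) * σ ^ m := by
        calc τ ^ (a+1/2) ≤ (2*σ) ^ (a+1/2) := Real.rpow_le_rpow hτ0.le hτσ (by linarith)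
          _ = 2 ^ (a+1/2) * σ ^ (a+1/2) := Real.mul_rpow (by norm_num) hσ0.le
          _ ≤ 2 ^ (a+1/2) * σ ^ m := by
              apply mul_le_mul_of_nonneg_left _ h2pow.le
              exact Real.rpow_le_rpow_of_exponent_ge hσ0 hσ1 hma
      calc (ca * M * (1 / A ^ p)) * (τ ^ (a+1/2) / (a+1/2))
          = (ca * M / (a+1/2)) * ((1/A^p) * τ ^ (a+1/2)) := by ring
        _ ≤ (ca * M / (a+1/2)) * ((1/A^p) * (2 ^ (a+1/2) * σ ^ m)) := by
            apply mul_le_mul_of_nonneg_left _ (by positivity)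
            apply mul_le_mul_of_nonneg_left ht1 (by positivity)
        _ = (ca * M * (2 ^ (a+1/2) / (a+1/2))) * ((1/A^p) * σ ^ m) := by ring
        _ = (ca * M * (2 ^ (a+1/2) / (a+1/2))) * X := by rw [hσm]
    -- combine
    calc (∫⁻ u in Icc (-1:ℝ) 0, ENNReal.ofReal (ca * (1 - u ^ 2) ^ (a - 1/2)) *
            ENNReal.ofReal (1 / (A + b * (1 - u)) ^ p)) +
          ((∫⁻ u in Ioc (0:ℝ) (1-τ), ENNReal.ofReal (ca * (1 - u ^ 2) ^ (a - 1/2)) *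
            ENNReal.ofReal (1 / (A + b * (1 - u)) ^ p)) +
          (∫⁻ u in Ioc (1-τ) (1:ℝ), ENNReal.ofReal (ca * (1 - u ^ 2) ^ (a - 1/2)) *
            ENNReal.ofReal (1 / (A + b * (1 - u)) ^ p)))
        ≤ ENNReal.ofReal ((ca * M * ((A+b) ^ (-p))) * (1/(a+1/2))) +
          (ENNReal.ofReal ((ca * M * (2 ^ p * (A+b) ^ (-p))) * (τ ^ (m-p) / (p-m))) +
           ENNReal.ofReal ((ca * M * (1 / A ^ p)) * (τ ^ (a+1/2) / (a+1/2)))) := by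
          exact add_le_add hP1 (add_le_add hP2 hP3)
      _ ≤ ENNReal.ofReal (ca * M * (1/(a+1/2)) * X) +
          (ENNReal.ofReal (ca * M * (2 ^ p / (p-m)) * X) +
           ENNReal.ofReal (ca * M * (2 ^ (a+1/2) / (a+1/2)) * X)) := by
          exact add_le_add (ENNReal.ofReal_le_ofReal hc1)
            (add_le_add (ENNReal.ofReal_le_ofReal hc2) (ENNReal.ofReal_le_ofReal hc3))
      _ = ENNReal.ofReal ((ca * M * (1/(a+1/2)) + (ca * M * (2 ^ p / (p-m)) +
            ca * M * (2 ^ (a+1/2) / (a+1/2)))) * X) := by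
          rw [add_mul, add_mul]
          rw [ENNReal.ofReal_add (by positivity) (by positivity),
            ENNReal.ofReal_add (by positivity) (by positivity)]
      _ = _ := by rw [hX]

end OneDim

section DoubleDim
open MeasureTheory Real Set

lemma double_dim (a₁ a₂ p m₁ m₂ : ℝ) (ha₁ : -(1/2) ≤ a₁) (ha₂ : -(1/2) ≤ a₂)
    (hm₁0 : 0 ≤ m₁) (hm₁a : m₁ ≤ a₁ + 1/2) (hm₂0 : 0 ≤ m₂) (hm₂a : m₂ ≤ a₂ + 1/2)
    (hsum : m₁ + m₂ < p) :
    ∃ C : ℝ, 0 < C ∧ ∀ A b₁ b₂ : ℝ, 0 < A → 0 ≤ b₁ → 0 ≤ b₂ →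
      ∫⁻ u, ∫⁻ v, ENNReal.ofReal (1 / (A + b₁ * (1 - u) + b₂ * (1 - v)) ^ p)
          ∂(PiMeasure a₂) ∂(PiMeasure a₁)
        ≤ ENNReal.ofReal (C * (A ^ (m₁ + m₂ - p) *
            ((A + b₁) ^ (-m₁) * (A + b₂) ^ (-m₂)))) := by
  obtain ⟨C₂, hC₂, H₂⟩ := one_dim a₂ p m₂ ha₂ hm₂0 hm₂a (by linarith)
  obtain ⟨C₁, hC₁, H₁⟩ := one_dim a₁ (p - m₂) m₁ ha₁ hm₁0 hm₁a (by linarith)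
  refine ⟨C₂ * C₁, mul_pos hC₂ hC₁, fun A b₁ b₂ hA hb₁ hb₂ => ?_⟩
  have hAb₂ : (0:ℝ) < A + b₂ := by linarith
  have step1 : ∫⁻ u, (∫⁻ v, ENNReal.ofReal (1 / (A + b₁ * (1 - u) + b₂ * (1 - v)) ^ p)
        ∂(PiMeasure a₂)) ∂(PiMeasure a₁)
      ≤ ∫⁻ u, ENNReal.ofReal ((C₂ * (A + b₂) ^ (-m₂)) *
          (1 / (A + b₁ * (1 - u)) ^ (p - m₂))) ∂(PiMeasure a₁) := by
    refine lintegral_mono_ae ?_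
    filter_upwards [piMeasure_ae_Icc (a := a₁)] with u hu
    have h1u : (0:ℝ) ≤ 1 - u := by linarith [hu.2]
    have hA' : (0:ℝ) < A + b₁ * (1 - u) := by
      have : (0:ℝ) ≤ b₁ * (1 - u) := mul_nonneg hb₁ h1u
      linarith
    refine (H₂ (A + b₁ * (1 - u)) b₂ hA' hb₂).trans (ENNReal.ofReal_le_ofReal ?_)
    have e1 : (A + b₁ * (1 - u)) ^ (m₂ - p) = 1 / (A + b₁ * (1 - u)) ^ (p - m₂) := by
      rw [show m₂ - p = -(p - m₂) by ring, Real.rpow_neg hA'.le, one_div]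
    have e2 : (A + b₁ * (1 - u) + b₂) ^ (-m₂) ≤ (A + b₂) ^ (-m₂) := by
      apply Real.rpow_le_rpow_of_nonpos hAb₂ _ (by linarith)
      have : (0:ℝ) ≤ b₁ * (1 - u) := mul_nonneg hb₁ h1u
      linarith
    calc C₂ * ((A + b₁ * (1 - u)) ^ (m₂ - p) * (A + b₁ * (1 - u) + b₂) ^ (-m₂))
        ≤ C₂ * ((A + b₁ * (1 - u)) ^ (m₂ - p) * (A + b₂) ^ (-m₂)) := by
          apply mul_le_mul_of_nonneg_left _ hC₂.le
          exact mul_le_mul_of_nonneg_left e2 (Real.rpow_nonneg hA'.le _)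
      _ = (C₂ * (A + b₂) ^ (-m₂)) * (1 / (A + b₁ * (1 - u)) ^ (p - m₂)) := by
          rw [e1]; ring
  refine step1.trans ?_
  have hK : (0:ℝ) ≤ C₂ * (A + b₂) ^ (-m₂) :=
    mul_nonneg hC₂.le (Real.rpow_nonneg hAb₂.le _)
  calc ∫⁻ u, ENNReal.ofReal ((C₂ * (A + b₂) ^ (-m₂)) *
          (1 / (A + b₁ * (1 - u)) ^ (p - m₂))) ∂(PiMeasure a₁)
      = ENNReal.ofReal (C₂ * (A + b₂) ^ (-m₂)) *
          ∫⁻ u, ENNReal.ofReal (1 / (A + b₁ * (1 - u)) ^ (p - m₂)) ∂(PiMeasure a₁) := by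
        rw [← lintegral_const_mul' _ _ ENNReal.ofReal_ne_top]
        congr 1
        funext u
        rw [ENNReal.ofReal_mul hK]
    _ ≤ ENNReal.ofReal (C₂ * (A + b₂) ^ (-m₂)) *
          ENNReal.ofReal (C₁ * (A ^ (m₁ - (p - m₂)) * (A + b₁) ^ (-m₁))) := by
        exact mul_le_mul_right (H₁ A b₁ hA hb₁) _
    _ = ENNReal.ofReal ((C₂ * (A + b₂) ^ (-m₂)) *
          (C₁ * (A ^ (m₁ - (p - m₂)) * (A + b₁) ^ (-m₁)))) := by
        rw [ENNReal.ofReal_mul hK]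
    _ = ENNReal.ofReal (C₂ * C₁ * (A ^ (m₁ + m₂ - p) *
          ((A + b₁) ^ (-m₁) * (A + b₂) ^ (-m₂)))) := by
        rw [show m₁ - (p - m₂) = m₁ + m₂ - p by ring]
        ring_nf
end DoubleDim

section MeasBound
open MeasureTheory Real Set

lemma measure_bound (α β : ℝ) (hα : -(1/2) ≤ α) (hβ : -(1/2) ≤ β) (θ r : ℝ)
    (hθ : θ ∈ Ioo 0 π) (hr : 0 < r) :
    jacobiMeasure α β (jacobiBall θ r) ≤ ENNReal.ofReal
      (2 * r * ((Real.sin (θ/2) + r) ^ (2*α+1) * (Real.cos (θ/2) + r) ^ (2*β+1))) := by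
  have hmeas : MeasurableSet (jacobiBall θ r) := by
    unfold jacobiBall
    exact (measurableSet_Ioo).inter measurableSet_Ioo
  unfold jacobiMeasure
  rw [withDensity_apply _ hmeas]
  rw [Measure.restrict_restrict hmeas]
  have hsub : jacobiBall θ r ∩ Ioo 0 π = jacobiBall θ r := by
    unfold jacobiBall
    rw [inter_assoc, inter_self]
  rw [hsub]
  have hsθ : 0 < Real.sin (θ/2) := by
    apply Real.sin_pos_of_pos_of_lt_pi (by linarith [hθ.1])
    linarith [hθ.2, Real.pi_pos]
  have hcθ : 0 < Real.cos (θ/2) := by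
    apply Real.cos_pos_of_mem_Ioo
    constructor <;> [linarith [hθ.1, Real.pi_pos]; linarith [hθ.2]]
  have hbd : ∀ x ∈ jacobiBall θ r,
      ENNReal.ofReal (Real.sin (x/2) ^ (2*α+1) * Real.cos (x/2) ^ (2*β+1)) ≤
      ENNReal.ofReal ((Real.sin (θ/2) + r) ^ (2*α+1) * (Real.cos (θ/2) + r) ^ (2*β+1)) := by
    intro x hx
    obtain ⟨⟨hx1, hx2⟩, hx3, hx4⟩ := hx
    apply ENNReal.ofReal_le_ofReal
    have hsx : 0 ≤ Real.sin (x/2) :=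
      Real.sin_nonneg_of_nonneg_of_le_pi (by linarith) (by linarith [Real.pi_pos])
    have hcx : 0 ≤ Real.cos (x/2) := by
      apply Real.cos_nonneg_of_mem_Icc
      constructor <;> [linarith [Real.pi_pos]; linarith]
    have hs : Real.sin (x/2) ≤ Real.sin (θ/2) + r := by
      have h := _root_.abs_sin_sub_sin_le (x/2) (θ/2)
      have h2 : |x/2 - θ/2| ≤ r := by
        rw [abs_le]
        constructor <;> [linarith; linarith]
      have := abs_le.1 (h.trans h2)
      linarith [this.2]
    have hc : Real.cos (x/2) ≤ Real.cos (θ/2) + r := by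
      have h := _root_.abs_cos_sub_cos_le (x/2) (θ/2)
      have h2 : |x/2 - θ/2| ≤ r := by
        rw [abs_le]
        constructor <;> [linarith; linarith]
      have := abs_le.1 (h.trans h2)
      linarith [this.2]
    apply mul_le_mul
    · exact Real.rpow_le_rpow hsx hs (by linarith)
    · exact Real.rpow_le_rpow hcx hc (by linarith)
    · exact Real.rpow_nonneg hcx _
    · exact Real.rpow_nonneg (by linarith) _
  calc ∫⁻ x in jacobiBall θ r,
        ENNReal.ofReal (Real.sin (x/2) ^ (2*α+1) * Real.cos (x/2) ^ (2*β+1)) ∂volume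
      ≤ ∫⁻ _x in jacobiBall θ r,
        ENNReal.ofReal ((Real.sin (θ/2) + r) ^ (2*α+1) * (Real.cos (θ/2) + r) ^ (2*β+1)) ∂volume := by
        refine lintegral_mono_ae ?_
        filter_upwards [ae_restrict_mem hmeas] with x hx
        exact hbd x hx
    _ = ENNReal.ofReal ((Real.sin (θ/2) + r) ^ (2*α+1) * (Real.cos (θ/2) + r) ^ (2*β+1)) *
        volume (jacobiBall θ r) := setLIntegral_const _ _
    _ ≤ ENNReal.ofReal ((Real.sin (θ/2) + r) ^ (2*α+1) * (Real.cos (θ/2) + r) ^ (2*β+1)) *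
        ENNReal.ofReal (2*r) := by
        apply mul_le_mul_right
        have h1 : jacobiBall θ r ⊆ Ioo (θ - r) (θ + r) := by
          unfold jacobiBall
          exact inter_subset_left
        refine (measure_mono h1).trans ?_
        rw [Real.volume_Ioo]
        apply ENNReal.ofReal_le_ofReal
        ring_nf
        exact le_refl _
    _ = ENNReal.ofReal
        (2 * r * ((Real.sin (θ/2) + r) ^ (2*α+1) * (Real.cos (θ/2) + r) ^ (2*β+1))) := by
        rw [← ENNReal.ofReal_mul (by positivity)]
        ring_nf

end MeasBound

section Endgame
open Real

set_option maxHeartbeats 1000000 in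
lemma endgame_real (γ₁ γ₂ a2 b2 m₁ m₂ D s1 c1 s2 c2 r A b₁ b₂ E F Cb : ℝ)
    (hD : 0 ≤ D) (hγ₁ : 0 ≤ γ₁) (hγ₂ : 0 ≤ γ₂) (ha2 : 0 ≤ a2) (hb2 : 0 ≤ b2)
    (hm₁ : 0 ≤ m₁) (hm₂ : 0 ≤ m₂)
    (hs1 : 0 < s1) (hc1 : 0 < c1) (hs2 : 0 ≤ s2) (hc2 : 0 ≤ c2) (hr : 0 < r)
    (hA : 0 < A) (hb₁ : 0 ≤ b₁) (hb₂ : 0 ≤ b₂)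
    (hA25 : r^2/25 ≤ A)
    (hAb₁ : ((s1+r)/10)^2 ≤ A + b₁) (hAb₂ : ((c1+r)/10)^2 ≤ A + b₂)
    (hpre1 : s1 + s2 ≤ 2*(s1+r)) (hpre2 : c1 + c2 ≤ 2*(c1+r))
    (hfac1 : (s1+r) ^ (2*γ₁ - 2*m₁ + a2) ≤ E)
    (hfac2 : (c1+r) ^ (2*γ₂ - 2*m₂ + b2) ≤ F)
    (hCb : 2^(2*γ₁) * 2^(2*γ₂) * D * 10^(2*m₁) * 10^(2*m₂) * E * F * 10 ≤ Cb) :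
    (s1+s2)^(2*γ₁) * (c1+c2)^(2*γ₂) *
      (D * (A^(-(1/2):ℝ) * ((A+b₁)^(-m₁) * (A+b₂)^(-m₂)))) *
      (2*r*((s1+r)^a2*(c1+r)^b2)) ≤ Cb := by
  set x := s1 + r with hx
  set y := c1 + r with hy
  have hx0 : 0 < x := by rw [hx]; linarith
  have hy0 : 0 < y := by rw [hy]; linarith
  have hE : 0 ≤ E := le_trans (rpow_nonneg hx0.le _) hfac1
  have hF : 0 ≤ F := le_trans (rpow_nonneg hy0.le _) hfac2
  -- factor bounds
  have t1 : (s1+s2)^(2*γ₁) ≤ 2^(2*γ₁) * x^(2*γ₁) := by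
    rw [← mul_rpow (by norm_num) hx0.le]
    exact rpow_le_rpow (by linarith) hpre1 (by linarith)
  have t2 : (c1+c2)^(2*γ₂) ≤ 2^(2*γ₂) * y^(2*γ₂) := by
    rw [← mul_rpow (by norm_num) hy0.le]
    exact rpow_le_rpow (by linarith) hpre2 (by linarith)
  have t3 : A^(-(1/2):ℝ) ≤ 5/r := by
    have k1 : A^(-(1/2):ℝ) ≤ (r^2/25)^(-(1/2):ℝ) :=
      rpow_le_rpow_of_nonpos (by positivity) hA25 (by norm_num)
    have k2 : ((r^2/25 : ℝ))^(-(1/2):ℝ) = 5/r := by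
      rw [show (r^2/25 : ℝ) = (r/5)^2 by ring, ← Real.rpow_natCast (r/5) 2,
        ← Real.rpow_mul (by positivity)]
      norm_num
      rw [Real.rpow_neg_one, inv_div]
    rw [k2] at k1
    exact k1
  have t4 : (A+b₁)^(-m₁) ≤ 10^(2*m₁) * x^(-(2*m₁)) := by
    have k1 : (A+b₁)^(-m₁) ≤ ((x/10)^2 : ℝ)^(-m₁) :=
      rpow_le_rpow_of_nonpos (by positivity) hAb₁ (by linarith)
    have k2 : (((x/10)^2 : ℝ))^(-m₁) = 10^(2*m₁) * x^(-(2*m₁)) := by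
      rw [← Real.rpow_natCast (x/10) 2, ← Real.rpow_mul (by positivity),
        show ((2:ℕ):ℝ) * (-m₁) = -(2*m₁) by push_cast; ring,
        Real.div_rpow hx0.le (by norm_num), Real.rpow_neg (by norm_num : (0:ℝ) ≤ 10),
        div_eq_mul_inv, inv_inv]
      ring
    rw [k2] at k1
    exact k1
  have t5 : (A+b₂)^(-m₂) ≤ 10^(2*m₂) * y^(-(2*m₂)) := by
    have k1 : (A+b₂)^(-m₂) ≤ ((y/10)^2 : ℝ)^(-m₂) :=
      rpow_le_rpow_of_nonpos (by positivity) hAb₂ (by linarith)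
    have k2 : (((y/10)^2 : ℝ))^(-m₂) = 10^(2*m₂) * y^(-(2*m₂)) := by
      rw [← Real.rpow_natCast (y/10) 2, ← Real.rpow_mul (by positivity),
        show ((2:ℕ):ℝ) * (-m₂) = -(2*m₂) by push_cast; ring,
        Real.div_rpow hy0.le (by norm_num), Real.rpow_neg (by norm_num : (0:ℝ) ≤ 10),
        div_eq_mul_inv, inv_inv]
      ring
    rw [k2] at k1
    exact k1
  -- nonnegativity facts
  have n1 : (0:ℝ) ≤ (s1+s2)^(2*γ₁) := rpow_nonneg (by linarith) _
  have n2 : (0:ℝ) ≤ (c1+c2)^(2*γ₂) := rpow_nonneg (by linarith) _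
  have n3 : (0:ℝ) ≤ A^(-(1/2):ℝ) := rpow_nonneg hA.le _
  have n4 : (0:ℝ) ≤ (A+b₁)^(-m₁) := rpow_nonneg (by linarith) _
  have n5 : (0:ℝ) ≤ (A+b₂)^(-m₂) := rpow_nonneg (by linarith) _
  have n6 : (0:ℝ) ≤ 2*r*(x^a2*y^b2) := by positivity
  have n7 : (0:ℝ) ≤ 2^(2*γ₁) * x^(2*γ₁) := by positivity
  have n8 : (0:ℝ) ≤ 2^(2*γ₂) * y^(2*γ₂) := by positivity
  have n9 : (0:ℝ) ≤ (5:ℝ)/r := by positivity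
  have n10 : (0:ℝ) ≤ 10^(2*m₁) * x^(-(2*m₁)) := by positivity
  have n11 : (0:ℝ) ≤ 10^(2*m₂) * y^(-(2*m₂)) := by positivity
  -- chain
  have step : (s1+s2)^(2*γ₁) * (c1+c2)^(2*γ₂) *
      (D * (A^(-(1/2):ℝ) * ((A+b₁)^(-m₁) * (A+b₂)^(-m₂)))) *
      (2*r*(x^a2*y^b2))
      ≤ (2^(2*γ₁) * x^(2*γ₁)) * (2^(2*γ₂) * y^(2*γ₂)) *
      (D * ((5/r) * ((10^(2*m₁) * x^(-(2*m₁))) * (10^(2*m₂) * y^(-(2*m₂)))))) *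
      (2*r*(x^a2*y^b2)) := by
    apply mul_le_mul_of_nonneg_right _ n6
    apply mul_le_mul
    · exact mul_le_mul t1 t2 n2 n7
    · apply mul_le_mul_of_nonneg_left _ hD
      apply mul_le_mul t3 (mul_le_mul t4 t5 n5 n10) (by positivity) n9
    · positivity
    · exact mul_nonneg n7 n8
  refine step.trans ?_
  have ex : x^(2*γ₁) * x^(-(2*m₁)) * x^a2 = x^(2*γ₁ - 2*m₁ + a2) := by
    rw [← Real.rpow_add hx0, ← Real.rpow_add hx0, show 2*γ₁ + -(2*m₁) + a2 = 2*γ₁ - 2*m₁ + a2 by ring]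
  have ey : y^(2*γ₂) * y^(-(2*m₂)) * y^b2 = y^(2*γ₂ - 2*m₂ + b2) := by
    rw [← Real.rpow_add hy0, ← Real.rpow_add hy0, show 2*γ₂ + -(2*m₂) + b2 = 2*γ₂ - 2*m₂ + b2 by ring]
  have hrr : (5/r) * (2*r) = 10 := by
    field_simp
    ring
  calc (2^(2*γ₁) * x^(2*γ₁)) * (2^(2*γ₂) * y^(2*γ₂)) *
      (D * ((5/r) * ((10^(2*m₁) * x^(-(2*m₁))) * (10^(2*m₂) * y^(-(2*m₂)))))) *
      (2*r*(x^a2*y^b2))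
      = (2^(2*γ₁) * 2^(2*γ₂) * D * 10^(2*m₁) * 10^(2*m₂)) *
        ((x^(2*γ₁) * x^(-(2*m₁)) * x^a2) * (y^(2*γ₂) * y^(-(2*m₂)) * y^b2)) *
        ((5/r) * (2*r)) := by ring
    _ = (2^(2*γ₁) * 2^(2*γ₂) * D * 10^(2*m₁) * 10^(2*m₂)) *
        (x^(2*γ₁ - 2*m₁ + a2) * y^(2*γ₂ - 2*m₂ + b2)) * 10 := by rw [ex, ey, hrr]
    _ ≤ (2^(2*γ₁) * 2^(2*γ₂) * D * 10^(2*m₁) * 10^(2*m₂)) * (E * F) * 10 := by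
        apply mul_le_mul_of_nonneg_right _ (by norm_num)
        apply mul_le_mul_of_nonneg_left _ (by positivity)
        exact mul_le_mul hfac1 hfac2 (rpow_nonneg hy0.le _) hE
    _ = 2^(2*γ₁) * 2^(2*γ₂) * D * 10^(2*m₁) * 10^(2*m₂) * E * F * 10 := by ring
    _ ≤ Cb := hCb

end Endgame

section Main
open MeasureTheory Real Set

set_option maxHeartbeats 1000000 in
lemma per_point (α β γ₁ γ₂ κ p m₁ m₂ D Cb : ℝ) (μ ν : Measure ℝ) (θ φ : ℝ)
    (hθ0 : 0 < θ) (hθπ : θ < π) (hφ0 : 0 < φ) (hφπ : φ < π) (hneq : θ ≠ φ)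
    (hα2 : 0 ≤ 2*α+1) (hβ2 : 0 ≤ 2*β+1) (hγ₁ : 0 ≤ γ₁) (hγ₂ : 0 ≤ γ₂)
    (hm₁ : 0 ≤ m₁) (hm₂ : 0 ≤ m₂) (hD : 0 < D)
    (hsum : m₁ + m₂ - p = -(1/2))
    (HD : ∀ A b₁ b₂ : ℝ, 0 < A → 0 ≤ b₁ → 0 ≤ b₂ →
      ∫⁻ u, ∫⁻ v, ENNReal.ofReal (1 / (A + b₁ * (1 - u) + b₂ * (1 - v)) ^ p) ∂ν ∂μ
        ≤ ENNReal.ofReal (D * (A ^ (m₁ + m₂ - p) * ((A + b₁) ^ (-m₁) * (A + b₂) ^ (-m₂)))))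
    (hfac1 : (Real.sin (θ/2) + |θ - φ|) ^ (2*γ₁ - 2*m₁ + (2*α+1)) ≤ 2^(2*κ))
    (hfac2 : (Real.cos (θ/2) + |θ - φ|) ^ (2*γ₂ - 2*m₂ + (2*β+1)) ≤ 2^(2*κ))
    (hCb : 2^(2*γ₁) * 2^(2*γ₂) * D * 10^(2*m₁) * 10^(2*m₂) * 2^(2*κ) * 2^(2*κ) * 10 ≤ Cb) :
    ENNReal.ofReal ((Real.sin (θ / 2) + Real.sin (φ / 2)) ^ (2 * γ₁) *
        (Real.cos (θ / 2) + Real.cos (φ / 2)) ^ (2 * γ₂)) *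
      (∫⁻ u, ∫⁻ v, ENNReal.ofReal (1 / qfun θ φ u v ^ p) ∂ν ∂μ)
      ≤ ENNReal.ofReal Cb / jacobiMeasure α β (jacobiBall θ |θ - φ|) := by
  have hπ := Real.pi_pos
  have hr0 : 0 < |θ - φ| := abs_pos.2 (sub_ne_zero.2 hneq)
  have hrπ : |θ - φ| < π := abs_sub_lt_iff.2 ⟨by linarith, by linarith⟩
  have hs1p : 0 < Real.sin (θ/2) :=
    Real.sin_pos_of_pos_of_lt_pi (by linarith) (by linarith)
  have hc1p : 0 < Real.cos (θ/2) :=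
    Real.cos_pos_of_mem_Ioo ⟨by linarith, by linarith⟩
  have hs2p : 0 < Real.sin (φ/2) :=
    Real.sin_pos_of_pos_of_lt_pi (by linarith) (by linarith)
  have hc2p : 0 < Real.cos (φ/2) :=
    Real.cos_pos_of_mem_Ioo ⟨by linarith, by linarith⟩
  -- Lipschitz facts
  have habs2 : |θ/2 - φ/2| = |θ - φ|/2 := by
    rw [show θ/2 - φ/2 = (θ - φ)/2 by ring, abs_div]
    norm_num
  have hls : |Real.sin (θ/2) - Real.sin (φ/2)| ≤ |θ - φ|/2 := by
    have h := _root_.abs_sin_sub_sin_le (θ/2) (φ/2)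
    rw [habs2] at h
    exact h
  have hlc : |Real.cos (θ/2) - Real.cos (φ/2)| ≤ |θ - φ|/2 := by
    have h := _root_.abs_cos_sub_cos_le (θ/2) (φ/2)
    rw [habs2] at h
    exact h
  -- q decomposition
  have hq : ∀ u v : ℝ, qfun θ φ u v =
      (1 - Real.sin (θ/2) * Real.sin (φ/2) - Real.cos (θ/2) * Real.cos (φ/2)) +
        Real.sin (θ/2) * Real.sin (φ/2) * (1 - u) +
        Real.cos (θ/2) * Real.cos (φ/2) * (1 - v) := by
    intro u v
    unfold qfun
    ring
  -- A facts
  have hAcos : 1 - Real.sin (θ/2) * Real.sin (φ/2) - Real.cos (θ/2) * Real.cos (φ/2)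
      = 1 - Real.cos ((θ - φ)/2) := by
    rw [show (θ - φ)/2 = θ/2 - φ/2 by ring, Real.cos_sub]
    ring
  have hA2 : 1 - Real.cos ((θ - φ)/2) = 2 * Real.sin (|θ - φ|/4) ^ 2 := by
    have e1 : Real.cos ((θ - φ)/2) = Real.cos (|θ - φ|/2) := by
      rw [show |θ - φ|/2 = |(θ - φ)/2| by rw [abs_div]; norm_num, Real.cos_abs]
    rw [e1, show |θ - φ|/2 = 2*(|θ - φ|/4) by ring, Real.cos_two_mul']
    have h := Real.sin_sq_add_cos_sq (|θ - φ|/4)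
    linarith
  have hsin4 : 0 < Real.sin (|θ - φ|/4) :=
    Real.sin_pos_of_pos_of_lt_pi (by linarith) (by linarith)
  have hApos : 0 < 1 - Real.sin (θ/2) * Real.sin (φ/2) - Real.cos (θ/2) * Real.cos (φ/2) := by
    rw [hAcos, hA2]
    nlinarith [hsin4]
  have hA25 : |θ - φ|^2/25 ≤
      1 - Real.sin (θ/2) * Real.sin (φ/2) - Real.cos (θ/2) * Real.cos (φ/2) := by
    rw [hAcos, hA2]
    have hmul := Real.mul_le_sin (x := |θ - φ|/4) (by positivity) (by linarith)
    have h2t : |θ - φ|/2 ≤ π * Real.sin (|θ - φ|/4) := by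
      calc |θ - φ|/2 = π * (2/π * (|θ - φ|/4)) := by
            field_simp
            ring
        _ ≤ π * Real.sin (|θ - φ|/4) := mul_le_mul_of_nonneg_left hmul hπ.le
    have h7 : |θ - φ| ≤ 7 * Real.sin (|θ - φ|/4) := by
      nlinarith [h2t, Real.pi_lt_d2, hsin4]
    nlinarith [h7, hsin4, abs_nonneg (θ - φ)]
  -- ball geometry
  have hAb1 : ((Real.sin (θ/2) + |θ - φ|)/10)^2 ≤
      (1 - Real.sin (θ/2) * Real.sin (φ/2) - Real.cos (θ/2) * Real.cos (φ/2)) +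
      Real.sin (θ/2) * Real.sin (φ/2) := by
    rcases le_total (|θ - φ|) (Real.sin (θ/2)) with hc | hc
    · have hub := (abs_le.1 hls).2
      have hge : Real.sin (θ/2) - |θ - φ|/2 ≤ Real.sin (φ/2) := by linarith
      have hprod : Real.sin (θ/2) * (Real.sin (θ/2) - |θ - φ|/2) ≤
          Real.sin (θ/2) * Real.sin (φ/2) := mul_le_mul_of_nonneg_left hge hs1p.le
      nlinarith [hApos, hprod, hs1p, hr0]
    · nlinarith [hA25, mul_nonneg hs1p.le hs2p.le, hr0, hs1p]
  have hAb2 : ((Real.cos (θ/2) + |θ - φ|)/10)^2 ≤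
      (1 - Real.sin (θ/2) * Real.sin (φ/2) - Real.cos (θ/2) * Real.cos (φ/2)) +
      Real.cos (θ/2) * Real.cos (φ/2) := by
    rcases le_total (|θ - φ|) (Real.cos (θ/2)) with hc | hc
    · have hub := (abs_le.1 hlc).2
      have hge : Real.cos (θ/2) - |θ - φ|/2 ≤ Real.cos (φ/2) := by linarith
      have hprod : Real.cos (θ/2) * (Real.cos (θ/2) - |θ - φ|/2) ≤
          Real.cos (θ/2) * Real.cos (φ/2) := mul_le_mul_of_nonneg_left hge hc1p.le
      nlinarith [hApos, hprod, hc1p, hr0]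
    · nlinarith [hA25, mul_nonneg hc1p.le hc2p.le, hr0, hc1p]
  have hpre1 : Real.sin (θ/2) + Real.sin (φ/2) ≤ 2*(Real.sin (θ/2) + |θ - φ|) := by
    have hub := (abs_le.1 hls).1
    linarith
  have hpre2 : Real.cos (θ/2) + Real.cos (φ/2) ≤ 2*(Real.cos (θ/2) + |θ - φ|) := by
    have hub := (abs_le.1 hlc).1
    linarith
  -- the double integral bound
  have hdbl := HD (1 - Real.sin (θ/2) * Real.sin (φ/2) - Real.cos (θ/2) * Real.cos (φ/2))
    (Real.sin (θ/2) * Real.sin (φ/2)) (Real.cos (θ/2) * Real.cos (φ/2))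
    hApos (mul_nonneg hs1p.le hs2p.le) (mul_nonneg hc1p.le hc2p.le)
  rw [hsum] at hdbl
  have hdbl' : ∫⁻ u, ∫⁻ v, ENNReal.ofReal (1 / qfun θ φ u v ^ p) ∂ν ∂μ ≤
      ENNReal.ofReal (D * ((1 - Real.sin (θ/2) * Real.sin (φ/2) -
        Real.cos (θ/2) * Real.cos (φ/2)) ^ (-(1/2):ℝ) *
        (((1 - Real.sin (θ/2) * Real.sin (φ/2) - Real.cos (θ/2) * Real.cos (φ/2)) +
          Real.sin (θ/2) * Real.sin (φ/2)) ^ (-m₁) *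
         ((1 - Real.sin (θ/2) * Real.sin (φ/2) - Real.cos (θ/2) * Real.cos (φ/2)) +
          Real.cos (θ/2) * Real.cos (φ/2)) ^ (-m₂)))) := by
    calc ∫⁻ u, ∫⁻ v, ENNReal.ofReal (1 / qfun θ φ u v ^ p) ∂ν ∂μ
        = ∫⁻ u, ∫⁻ v, ENNReal.ofReal (1 /
            ((1 - Real.sin (θ/2) * Real.sin (φ/2) - Real.cos (θ/2) * Real.cos (φ/2)) +
              Real.sin (θ/2) * Real.sin (φ/2) * (1 - u) +
              Real.cos (θ/2) * Real.cos (φ/2) * (1 - v)) ^ p) ∂ν ∂μ := by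
          simp only [hq]
      _ ≤ _ := hdbl
  -- measure bound
  have hμb := measure_bound α β (by linarith) (by linarith) θ (|θ - φ|) ⟨hθ0, hθπ⟩ hr0
  have hμtop : jacobiMeasure α β (jacobiBall θ |θ - φ|) ≠ ⊤ :=
    ne_top_of_le_ne_top ENNReal.ofReal_ne_top hμb
  have hCb0 : 0 < Cb := lt_of_lt_of_le (by positivity) hCb
  rw [ENNReal.le_div_iff_mul_le (Or.inr (ENNReal.ofReal_pos.2 hCb0).ne') (Or.inl hμtop)]
  have hpref : 0 ≤ (Real.sin (θ/2) + Real.sin (φ/2)) ^ (2*γ₁) *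
      (Real.cos (θ/2) + Real.cos (φ/2)) ^ (2*γ₂) :=
    mul_nonneg (Real.rpow_nonneg (by linarith) _) (Real.rpow_nonneg (by linarith) _)
  have hDexpr : 0 ≤ D * ((1 - Real.sin (θ/2) * Real.sin (φ/2) -
        Real.cos (θ/2) * Real.cos (φ/2)) ^ (-(1/2):ℝ) *
        (((1 - Real.sin (θ/2) * Real.sin (φ/2) - Real.cos (θ/2) * Real.cos (φ/2)) +
          Real.sin (θ/2) * Real.sin (φ/2)) ^ (-m₁) *
         ((1 - Real.sin (θ/2) * Real.sin (φ/2) - Real.cos (θ/2) * Real.cos (φ/2)) +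
          Real.cos (θ/2) * Real.cos (φ/2)) ^ (-m₂))) := by
    apply mul_nonneg hD.le
    apply mul_nonneg (Real.rpow_nonneg hApos.le _)
    exact mul_nonneg (Real.rpow_nonneg (by nlinarith [hApos, mul_nonneg hs1p.le hs2p.le]) _)
      (Real.rpow_nonneg (by nlinarith [hApos, mul_nonneg hc1p.le hc2p.le]) _)
  calc ENNReal.ofReal ((Real.sin (θ / 2) + Real.sin (φ / 2)) ^ (2 * γ₁) *
        (Real.cos (θ / 2) + Real.cos (φ / 2)) ^ (2 * γ₂)) *
      (∫⁻ u, ∫⁻ v, ENNReal.ofReal (1 / qfun θ φ u v ^ p) ∂ν ∂μ) *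
      jacobiMeasure α β (jacobiBall θ |θ - φ|)
      ≤ ENNReal.ofReal ((Real.sin (θ / 2) + Real.sin (φ / 2)) ^ (2 * γ₁) *
          (Real.cos (θ / 2) + Real.cos (φ / 2)) ^ (2 * γ₂)) *
        ENNReal.ofReal (D * ((1 - Real.sin (θ/2) * Real.sin (φ/2) -
          Real.cos (θ/2) * Real.cos (φ/2)) ^ (-(1/2):ℝ) *
          (((1 - Real.sin (θ/2) * Real.sin (φ/2) - Real.cos (θ/2) * Real.cos (φ/2)) +
            Real.sin (θ/2) * Real.sin (φ/2)) ^ (-m₁) *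
           ((1 - Real.sin (θ/2) * Real.sin (φ/2) - Real.cos (θ/2) * Real.cos (φ/2)) +
            Real.cos (θ/2) * Real.cos (φ/2)) ^ (-m₂)))) *
        ENNReal.ofReal (2 * |θ - φ| * ((Real.sin (θ/2) + |θ - φ|) ^ (2*α+1) *
          (Real.cos (θ/2) + |θ - φ|) ^ (2*β+1))) := by
        exact mul_le_mul' (mul_le_mul_right hdbl' _) hμb
    _ = ENNReal.ofReal (((Real.sin (θ / 2) + Real.sin (φ / 2)) ^ (2 * γ₁) *
          (Real.cos (θ / 2) + Real.cos (φ / 2)) ^ (2 * γ₂)) *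
        (D * ((1 - Real.sin (θ/2) * Real.sin (φ/2) -
          Real.cos (θ/2) * Real.cos (φ/2)) ^ (-(1/2):ℝ) *
          (((1 - Real.sin (θ/2) * Real.sin (φ/2) - Real.cos (θ/2) * Real.cos (φ/2)) +
            Real.sin (θ/2) * Real.sin (φ/2)) ^ (-m₁) *
           ((1 - Real.sin (θ/2) * Real.sin (φ/2) - Real.cos (θ/2) * Real.cos (φ/2)) +
            Real.cos (θ/2) * Real.cos (φ/2)) ^ (-m₂)))) *
        (2 * |θ - φ| * ((Real.sin (θ/2) + |θ - φ|) ^ (2*α+1) *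
          (Real.cos (θ/2) + |θ - φ|) ^ (2*β+1)))) := by
        rw [← ENNReal.ofReal_mul hpref, ← ENNReal.ofReal_mul (mul_nonneg hpref hDexpr)]
    _ ≤ ENNReal.ofReal Cb := by
        apply ENNReal.ofReal_le_ofReal
        exact endgame_real γ₁ γ₂ (2*α+1) (2*β+1) m₁ m₂ D (Real.sin (θ/2)) (Real.cos (θ/2))
          (Real.sin (φ/2)) (Real.cos (φ/2)) (|θ - φ|)
          (1 - Real.sin (θ/2) * Real.sin (φ/2) - Real.cos (θ/2) * Real.cos (φ/2))
          (Real.sin (θ/2) * Real.sin (φ/2)) (Real.cos (θ/2) * Real.cos (φ/2))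
          (2^(2*κ)) (2^(2*κ)) Cb
          hD.le hγ₁ hγ₂ hα2 hβ2 hm₁ hm₂ hs1p hc1p hs2p.le hc2p.le hr0 hApos
          (mul_nonneg hs1p.le hs2p.le) (mul_nonneg hc1p.le hc2p.le)
          hA25 hAb1 hAb2 hpre1 hpre2 hfac1 hfac2 hCb

end Main

section FinalThm
open MeasureTheory Real Set

set_option maxHeartbeats 1000000 in
/-- first estimate of the generalized Lemma 4.3 (Lemma `L4.3*`). -/
theorem generalized_double_integral_q_bound_one (α β γ₁ γ₂ κ κ₁ κ₂ : ℝ)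
    (hα : -(1 / 2) ≤ α) (hβ : -(1 / 2) ≤ β)
    (hγ₁ : 0 ≤ γ₁) (hγ₂ : 0 ≤ γ₂) (hκ : 0 ≤ κ) (hκ₁ : 0 ≤ κ₁) (hκ₂ : 0 ≤ κ₂) :
    ∃ C : ℝ, 0 < C ∧
      ∀ θ ∈ Ioo (0 : ℝ) π, ∀ φ ∈ Ioo (0 : ℝ) π, θ ≠ φ →
        ENNReal.ofReal
            ((Real.sin (θ / 2) + Real.sin (φ / 2)) ^ (2 * γ₁) *
              (Real.cos (θ / 2) + Real.cos (φ / 2)) ^ (2 * γ₂)) *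
          (∫⁻ u, ∫⁻ v,
              ENNReal.ofReal (1 / qfun θ φ u v ^ (α + β + 3 / 2 + γ₁ + γ₂ + κ))
            ∂(PiMeasure (β + γ₂ + κ + κ₂)) ∂(PiMeasure (α + γ₁ + κ + κ₁)))
          ≤ ENNReal.ofReal C / jacobiMeasure α β (jacobiBall θ |θ - φ|) := by
  obtain ⟨D₁, hD₁, HI⟩ := double_dim (α + γ₁ + κ + κ₁) (β + γ₂ + κ + κ₂)
    (α + β + 3 / 2 + γ₁ + γ₂ + κ) (α + γ₁ + 1/2) (β + γ₂ + κ + 1/2)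
    (by linarith) (by linarith) (by linarith) (by linarith) (by linarith) (by linarith)
    (by linarith)
  obtain ⟨D₂, hD₂, HII⟩ := double_dim (α + γ₁ + κ + κ₁) (β + γ₂ + κ + κ₂)
    (α + β + 3 / 2 + γ₁ + γ₂ + κ) (α + γ₁ + κ + 1/2) (β + γ₂ + 1/2)
    (by linarith) (by linarith) (by linarith) (by linarith) (by linarith) (by linarith)
    (by linarith)
  have hCb₁pos : (0:ℝ) < 2^(2*γ₁) * 2^(2*γ₂) * D₁ * 10^(2*(α + γ₁ + 1/2)) *
      10^(2*(β + γ₂ + κ + 1/2)) * 2^(2*κ) * 2^(2*κ) * 10 := by positivity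
  have hCb₂pos : (0:ℝ) < 2^(2*γ₁) * 2^(2*γ₂) * D₂ * 10^(2*(α + γ₁ + κ + 1/2)) *
      10^(2*(β + γ₂ + 1/2)) * 2^(2*κ) * 2^(2*κ) * 10 := by positivity
  refine ⟨2^(2*γ₁) * 2^(2*γ₂) * D₁ * 10^(2*(α + γ₁ + 1/2)) *
      10^(2*(β + γ₂ + κ + 1/2)) * 2^(2*κ) * 2^(2*κ) * 10 +
      2^(2*γ₁) * 2^(2*γ₂) * D₂ * 10^(2*(α + γ₁ + κ + 1/2)) *
      10^(2*(β + γ₂ + 1/2)) * 2^(2*κ) * 2^(2*κ) * 10, by linarith, ?_⟩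
  intro θ hθ φ hφ hneq
  obtain ⟨hθ0, hθπ⟩ := hθ
  obtain ⟨hφ0, hφπ⟩ := hφ
  have hπ := Real.pi_pos
  have hr0 : 0 < |θ - φ| := abs_pos.2 (sub_ne_zero.2 hneq)
  have h2κ : (1:ℝ) ≤ 2^(2*κ) := by
    have h1 : (2:ℝ)^(0:ℝ) ≤ 2^(2*κ) :=
      Real.rpow_le_rpow_of_exponent_le one_le_two (by linarith)
    rwa [Real.rpow_zero] at h1
  have hhalf : ∀ w : ℝ, 1/2 ≤ w → w ^ (-(2*κ)) ≤ 2^(2*κ) := by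
    intro w hw
    calc w ^ (-(2*κ)) ≤ (1/2:ℝ) ^ (-(2*κ)) :=
          Real.rpow_le_rpow_of_nonpos one_half_pos hw (by linarith)
      _ = 2^(2*κ) := by
          rw [one_div, Real.inv_rpow (by norm_num), Real.rpow_neg (by norm_num), inv_inv]
  rcases le_total θ (π/2) with hreg | hreg
  · -- region I : θ ≤ π/2, cos(θ/2) ≥ 1/2
    have hcge : (1:ℝ)/2 ≤ Real.cos (θ/2) := by
      have h1 : Real.cos (π/4) ≤ Real.cos (θ/2) :=
        Real.cos_le_cos_of_nonneg_of_le_pi (by linarith) (by linarith) (by linarith)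
      rw [Real.cos_pi_div_four] at h1
      nlinarith [Real.sq_sqrt (show (0:ℝ) ≤ 2 by norm_num), Real.sqrt_nonneg 2]
    refine (per_point α β γ₁ γ₂ κ (α + β + 3 / 2 + γ₁ + γ₂ + κ)
      (α + γ₁ + 1/2) (β + γ₂ + κ + 1/2) D₁ _
      (PiMeasure (α + γ₁ + κ + κ₁)) (PiMeasure (β + γ₂ + κ + κ₂)) θ φ
      hθ0 hθπ hφ0 hφπ hneq (by linarith) (by linarith) hγ₁ hγ₂
      (by linarith) (by linarith) hD₁ (by ring) HI ?_ ?_ le_rfl).trans ?_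
    · rw [show 2*γ₁ - 2*(α + γ₁ + 1/2) + (2*α+1) = 0 by ring, Real.rpow_zero]
      exact h2κ
    · rw [show 2*γ₂ - 2*(β + γ₂ + κ + 1/2) + (2*β+1) = -(2*κ) by ring]
      exact hhalf _ (by linarith)
    · apply ENNReal.div_le_div_right
      exact ENNReal.ofReal_le_ofReal (by linarith)
  · -- region II : θ ≥ π/2, sin(θ/2) ≥ 1/2
    have hsge : (1:ℝ)/2 ≤ Real.sin (θ/2) := by
      have h0 : Real.cos (π/4) ≤ Real.cos (π/2 - θ/2) :=
        Real.cos_le_cos_of_nonneg_of_le_pi (by linarith) (by linarith) (by linarith)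
      rw [Real.cos_pi_div_four, Real.cos_pi_div_two_sub] at h0
      nlinarith [Real.sq_sqrt (show (0:ℝ) ≤ 2 by norm_num), Real.sqrt_nonneg 2]
    refine (per_point α β γ₁ γ₂ κ (α + β + 3 / 2 + γ₁ + γ₂ + κ)
      (α + γ₁ + κ + 1/2) (β + γ₂ + 1/2) D₂ _
      (PiMeasure (α + γ₁ + κ + κ₁)) (PiMeasure (β + γ₂ + κ + κ₂)) θ φ
      hθ0 hθπ hφ0 hφπ hneq (by linarith) (by linarith) hγ₁ hγ₂
      (by linarith) (by linarith) hD₂ (by ring) HII ?_ ?_ le_rfl).trans ?_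
    · rw [show 2*γ₁ - 2*(α + γ₁ + κ + 1/2) + (2*α+1) = -(2*κ) by ring]
      exact hhalf _ (by linarith)
    · rw [show 2*γ₂ - 2*(β + γ₂ + 1/2) + (2*β+1) = 0 by ring, Real.rpow_zero]
      exact h2κ
    · apply ENNReal.div_le_div_right
      exact ENNReal.ofReal_le_ofReal (by linarith)

end FinalThm
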